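/- The algebraic identity p_0·p_x + q_0·(αΔ − νI)q_x = (1/2)[q_0·(αΔ − νI)q_x − ((αΔ − νI)q_0)·q_x] + (1/2) A[p_0·q_x + q_0·p_x] holds, where A is the Hamiltonian vector field; moreover the first bracket is a discrete gradient: (1/2)[q_0·(αΔ−νI)q_x − ((αΔ−νI)q_0)·q_x] = (α/2) Σ_j ∇_{e_j}[q_x·q_{−e_j} − q_0·q_{x−e_j}], where ∇_{e_j} shifts all lattice indices by e_j. -/
import Mathlib


open scoped BigOperators

/-- Canonical basis vector `e j` of `ℤ^d`. -/
def latE (d : ℕ) (j : Fin d) : Fin d → ℤ := fun i => if i = j then 1 else 0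

/-- Discrete Laplacian on `ℤ^d` acting componentwise on `q : ℤ^d → ℝ^d`. -/
def discLap {d : ℕ} (q : (Fin d → ℤ) → Fin d → ℝ) (x : Fin d → ℤ) (k : Fin d) : ℝ :=
  ∑ m : Fin d, (q (x + latE d m) k + q (x - latE d m) k - 2 * q x k)

/-- The Hamiltonian vector field
`A = Σ_y [ p_y·∂_{q_y} + ((αΔ − νI)q_y)·∂_{p_y} ]` acting on a function `F`
of the configuration `(q, p)`, via directional derivatives. -/
noncomputable def Agen {d : ℕ} (α ν : ℝ)
    (F : ((Fin d → ℤ) → Fin d → ℝ) → ((Fin d → ℤ) → Fin d → ℝ) → ℝ)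
    (q p : (Fin d → ℤ) → Fin d → ℝ) : ℝ :=
  ∑' y : Fin d → ℤ, ∑ k : Fin d,
    (p y k *
      deriv (fun t : ℝ =>
        F (fun z i => q z i + t * (if z = y ∧ i = k then 1 else 0)) p) 0
    + (α * discLap q y k - ν * q y k) *
      deriv (fun t : ℝ =>
        F q (fun z i => p z i + t * (if z = y ∧ i = k then 1 else 0))) 0)

lemma deriv_aux (a b : ℝ) : deriv (fun t : ℝ => a + t * b) 0 = b := by
  have h : HasDerivAt (fun t : ℝ => a + t * b) b 0 := by
    simpa using ((hasDerivAt_id (0:ℝ)).mul_const b).const_add a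
  exact h.deriv


/-- The fluctuation–dissipation algebraic identity:
`p_0·p_x + q_0·(αΔ − νI)q_x
  = (1/2)[q_0·(αΔ − νI)q_x − ((αΔ − νI)q_0)·q_x] + (1/2) A[p_0·q_x + q_0·p_x]`,
and the antisymmetric bracket is a discrete gradient:
`(1/2)[q_0·(αΔ−νI)q_x − ((αΔ−νI)q_0)·q_x]
  = (α/2) Σ_j ∇_{e_j}[q_x·q_{−e_j} − q_0·q_{x−e_j}]`, where
`∇_{e_j}` shifts all lattice indices by `e_j`. -/
theorem fluctuation_dissipation_identity (d : ℕ) (α ν : ℝ)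
    (hα : 0 < α) (hν : 0 ≤ ν)
    (q p : (Fin d → ℤ) → Fin d → ℝ) (x : Fin d → ℤ) :
    ((∑ k : Fin d, p 0 k * p x k)
        + ∑ k : Fin d, q 0 k * (α * discLap q x k - ν * q x k)
      = (1 / 2) * ((∑ k : Fin d, q 0 k * (α * discLap q x k - ν * q x k))
          - ∑ k : Fin d, (α * discLap q 0 k - ν * q 0 k) * q x k)
        + (1 / 2) * Agen α ν
            (fun q p => (∑ k : Fin d, p 0 k * q x k) + ∑ k : Fin d, q 0 k * p x k)
            q p) ∧
    ((1 / 2) * ((∑ k : Fin d, q 0 k * (α * discLap q x k - ν * q x k))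
        - ∑ k : Fin d, (α * discLap q 0 k - ν * q 0 k) * q x k)
      = (α / 2) * ∑ j : Fin d,
          (((∑ k : Fin d, q (x + latE d j) k * q 0 k)
              - ∑ k : Fin d, q (latE d j) k * q x k)
            - ((∑ k : Fin d, q x k * q (-(latE d j)) k)
              - ∑ k : Fin d, q 0 k * q (x - latE d j) k))) := by
  set g : (Fin d → ℤ) → ℝ := fun y => ∑ k : Fin d,
      (p y k * ((if x = y then p 0 k else 0) + (if (0 : Fin d → ℤ) = y then p x k else 0))
      + (α * discLap q y k - ν * q y k) *
        ((if (0 : Fin d → ℤ) = y then q x k else 0) + (if x = y then q 0 k else 0))) with hgdef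
  have hA : Agen α ν
      (fun q p => (∑ k : Fin d, p 0 k * q x k) + ∑ k : Fin d, q 0 k * p x k) q p
      = ∑' y : Fin d → ℤ, g y := by
    unfold Agen
    refine tsum_congr fun y => Finset.sum_congr rfl fun k _ => ?_
    have h1 : deriv (fun t : ℝ =>
        ((∑ k' : Fin d, p 0 k' * (q x k' + t * (if x = y ∧ k' = k then 1 else 0)))
          + ∑ k' : Fin d, (q 0 k' + t * (if (0:Fin d → ℤ) = y ∧ k' = k then 1 else 0)) * p x k')) 0
        = (if x = y then p 0 k else 0) + (if (0 : Fin d → ℤ) = y then p x k else 0) := by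
      have heq : (fun t : ℝ =>
          ((∑ k' : Fin d, p 0 k' * (q x k' + t * (if x = y ∧ k' = k then 1 else 0)))
            + ∑ k' : Fin d, (q 0 k' + t * (if (0:Fin d → ℤ) = y ∧ k' = k then 1 else 0)) * p x k'))
          = fun t : ℝ => ((∑ k' : Fin d, p 0 k' * q x k') + ∑ k' : Fin d, q 0 k' * p x k')
            + t * ((if x = y then p 0 k else 0) + (if (0 : Fin d → ℤ) = y then p x k else 0)) := by
        funext t
        by_cases hx : x = y <;> by_cases h0 : (0 : Fin d → ℤ) = y <;>
          simp [hx, h0, mul_add, add_mul, Finset.sum_add_distrib, mul_ite, ite_mul,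
            Finset.sum_ite_eq'] <;> ring
      rw [heq, deriv_aux]
    have h2 : deriv (fun t : ℝ =>
        ((∑ k' : Fin d, (p 0 k' + t * (if (0:Fin d → ℤ) = y ∧ k' = k then 1 else 0)) * q x k')
          + ∑ k' : Fin d, q 0 k' * (p x k' + t * (if x = y ∧ k' = k then 1 else 0)))) 0
        = (if (0 : Fin d → ℤ) = y then q x k else 0) + (if x = y then q 0 k else 0) := by
      have heq : (fun t : ℝ =>
          ((∑ k' : Fin d, (p 0 k' + t * (if (0:Fin d → ℤ) = y ∧ k' = k then 1 else 0)) * q x k')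
            + ∑ k' : Fin d, q 0 k' * (p x k' + t * (if x = y ∧ k' = k then 1 else 0))))
          = fun t : ℝ => ((∑ k' : Fin d, p 0 k' * q x k') + ∑ k' : Fin d, q 0 k' * p x k')
            + t * ((if (0 : Fin d → ℤ) = y then q x k else 0) + (if x = y then q 0 k else 0)) := by
        funext t
        by_cases hx : x = y <;> by_cases h0 : (0 : Fin d → ℤ) = y <;>
          simp [hx, h0, mul_add, add_mul, Finset.sum_add_distrib, mul_ite, ite_mul,
            Finset.sum_ite_eq'] <;> ring
      rw [heq, deriv_aux]
    rw [h1, h2]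
  -- evaluate the tsum: support is contained in {0, x}
  have hzero : ∀ y ∉ ({0, x} : Finset (Fin d → ℤ)), g y = 0 := by
    intro y hy
    simp only [Finset.mem_insert, Finset.mem_singleton, not_or] at hy
    have h1 : (0 : Fin d → ℤ) ≠ y := Ne.symm hy.1
    have h2 : x ≠ y := Ne.symm hy.2
    simp [hgdef, h1, h2]
  have hsum : (∑' y : Fin d → ℤ, g y) = ∑ y ∈ ({0, x} : Finset (Fin d → ℤ)), g y :=
    tsum_eq_sum hzero
  constructor
  · rw [hA, hsum]
    by_cases hx0 : x = 0
    · subst hx0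
      rw [show ({(0 : Fin d → ℤ), 0} : Finset (Fin d → ℤ)) = {0} from by simp,
        Finset.sum_singleton]
      have e1 : g 0 = (∑ k : Fin d, p 0 k * p 0 k) + (∑ k : Fin d, p 0 k * p 0 k)
          + ((∑ k : Fin d, (α * discLap q 0 k - ν * q 0 k) * q 0 k)
            + ∑ k : Fin d, (α * discLap q 0 k - ν * q 0 k) * q 0 k) := by
        simp [hgdef, mul_add, Finset.sum_add_distrib]
      have e2 : (∑ k : Fin d, q 0 k * (α * discLap q 0 k - ν * q 0 k))
          = ∑ k : Fin d, (α * discLap q 0 k - ν * q 0 k) * q 0 k :=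
        Finset.sum_congr rfl fun k _ => mul_comm _ _
      rw [e1, e2]; ring
    · have h0x : (0 : Fin d → ℤ) ≠ x := Ne.symm hx0
      rw [Finset.sum_pair h0x]
      have e1 : g 0 = (∑ k : Fin d, p 0 k * p x k)
          + ∑ k : Fin d, (α * discLap q 0 k - ν * q 0 k) * q x k := by
        simp [hgdef, hx0, h0x, Finset.sum_add_distrib]
      have e2 : g x = (∑ k : Fin d, p 0 k * p x k)
          + ∑ k : Fin d, q 0 k * (α * discLap q x k - ν * q x k) := by
        have c1 : (∑ k : Fin d, p x k * p 0 k) = ∑ k : Fin d, p 0 k * p x k :=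
          Finset.sum_congr rfl fun k _ => mul_comm _ _
        have c2 : (∑ k : Fin d, (α * discLap q x k - ν * q x k) * q 0 k)
            = ∑ k : Fin d, q 0 k * (α * discLap q x k - ν * q x k) :=
          Finset.sum_congr rfl fun k _ => mul_comm _ _
        simp [hgdef, hx0, h0x, Finset.sum_add_distrib, c1, c2]
      rw [e1, e2]; ring
  · -- the discrete-gradient identity
    have key : (∑ k : Fin d, q 0 k * (α * discLap q x k - ν * q x k))
        - ∑ k : Fin d, (α * discLap q 0 k - ν * q 0 k) * q x k
        = α * ∑ k : Fin d, ∑ m : Fin d,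
            (q (x + latE d m) k * q 0 k - q (latE d m) k * q x k
              - q x k * q (-(latE d m)) k + q 0 k * q (x - latE d m) k) := by
      rw [← Finset.sum_sub_distrib, Finset.mul_sum]
      refine Finset.sum_congr rfl fun k _ => ?_
      rw [show q 0 k * (α * discLap q x k - ν * q x k)
            - (α * discLap q 0 k - ν * q 0 k) * q x k
          = α * (q 0 k * discLap q x k - discLap q 0 k * q x k) from by ring]
      rw [discLap, discLap, Finset.mul_sum, Finset.sum_mul, ← Finset.sum_sub_distrib]
      simp only [zero_add, zero_sub, Finset.mul_sum]
      exact Finset.sum_congr rfl fun m _ => by ring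
    rw [key]
    have h2 : (∑ j : Fin d,
          (((∑ k : Fin d, q (x + latE d j) k * q 0 k)
              - ∑ k : Fin d, q (latE d j) k * q x k)
            - ((∑ k : Fin d, q x k * q (-(latE d j)) k)
              - ∑ k : Fin d, q 0 k * q (x - latE d j) k)))
        = ∑ j : Fin d, ∑ k : Fin d,
            (q (x + latE d j) k * q 0 k - q (latE d j) k * q x k
              - q x k * q (-(latE d j)) k + q 0 k * q (x - latE d j) k) := by
      refine Finset.sum_congr rfl fun j _ => ?_
      rw [← Finset.sum_sub_distrib, ← Finset.sum_sub_distrib, ← Finset.sum_sub_distrib]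
      exact Finset.sum_congr rfl fun k _ => by ring
    rw [h2, Finset.sum_comm]
    ring
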